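/- In the planar bipartite graph obtained after deleting all S_f–S_f edges from a nesting graph, every inner face is incident to at least two edges of the cycle C. -/

import Mathlib

/-- The bipartite graph obtained from a nesting graph after deleting all edges
among the split vertices: a cycle on `Fin m` (cyclic successor adjacency),
where each cycle vertex `i` is joined to its unique split neighbor
`nbr i ∈ Fin s`. -/
def nestGraph0 (m s : ℕ) (nbr : Fin m → Fin s) :
    SimpleGraph (Fin m ⊕ Fin s) :=
  SimpleGraph.fromRel fun a b =>
    match a, b with
    | Sum.inl i, Sum.inl j => j.1 = (i.1 + 1) % m
    | Sum.inl i, Sum.inr t => nbr i = t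
    | _, _ => False

open SimpleGraph Walk

section
variable {m s : ℕ} {nbr : Fin m → Fin s}

lemma ng_adj_inl_inr {i : Fin m} {t : Fin s} :
    (nestGraph0 m s nbr).Adj (Sum.inl i) (Sum.inr t) ↔ nbr i = t := by
  simp [nestGraph0, SimpleGraph.fromRel_adj]

lemma ng_adj_inr_inl {i : Fin m} {t : Fin s} :
    (nestGraph0 m s nbr).Adj (Sum.inr t) (Sum.inl i) ↔ nbr i = t := by
  simp [nestGraph0, SimpleGraph.fromRel_adj]

lemma ng_not_adj_inr_inr {t t' : Fin s} :
    ¬ (nestGraph0 m s nbr).Adj (Sum.inr t) (Sum.inr t') := by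
  simp [nestGraph0, SimpleGraph.fromRel_adj]

lemma ng_adj_inl_inl {i j : Fin m} :
    (nestGraph0 m s nbr).Adj (Sum.inl i) (Sum.inl j) ↔
      i ≠ j ∧ (j.1 = (i.1 + 1) % m ∨ i.1 = (j.1 + 1) % m) := by
  simp [nestGraph0, SimpleGraph.fromRel_adj]

end

section
variable {m s : ℕ} {nbr : Fin m → Fin s}

open SimpleGraph Walk Sum

lemma ng_key (hnonadj : ∀ i j : Fin m, j.1 = (i.1 + 1) % m → i ≠ j → nbr i ≠ nbr j)
    {i j : Fin m} (h : (nestGraph0 m s nbr).Adj (Sum.inl i) (Sum.inl j)) :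
    nbr i ≠ nbr j := by
  rw [ng_adj_inl_inl] at h
  obtain ⟨hne, h | h⟩ := h
  · exact hnonadj i j h hne
  · exact fun hh => hnonadj j i h (Ne.symm hne) hh.symm

/-- In a nodup-support walk starting at a cycle vertex using only spoke edges,
the length is at most 2, with structure info. -/
lemma ng_spoke_path (j : Fin m) (w : Fin m ⊕ Fin s)
    (p : (nestGraph0 m s nbr).Walk (Sum.inl j) w)
    (hp : p.support.Nodup)
    (hs : ∀ e ∈ p.edges, ∀ a b : Fin m, e ≠ s(Sum.inl a, Sum.inl b)) :
    p.length ≤ 2 ∧ (p.length = 1 → w = Sum.inr (nbr j)) ∧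
      (p.length = 2 → ∃ k : Fin m, w = Sum.inl k ∧ nbr k = nbr j) := by
  cases p with
  | nil => simp
  | cons h p =>
    rename_i x
    -- first step must go to inr (nbr j)
    have hx : x = Sum.inr (nbr j) := by
      cases x with
      | inl k => exact absurd rfl (hs _ (by simp) j k)
      | inr t => rw [ng_adj_inl_inr] at h; rw [h]
    subst hx
    cases p with
    | nil => simp
    | cons h' q =>
      rename_i y
      have hy : ∃ k : Fin m, y = Sum.inl k ∧ nbr k = nbr j := by
        cases y with
        | inl k => rw [ng_adj_inr_inl] at h'; exact ⟨k, rfl, h'⟩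
        | inr t => exact absurd h' ng_not_adj_inr_inr
      obtain ⟨k, rfl, hk⟩ := hy
      cases q with
      | nil => simp [hk]
      | cons h'' q' =>
        rename_i z
        exfalso
        have hz : z = Sum.inr (nbr j) := by
          cases z with
          | inl a => exact absurd rfl (hs _ (by simp) k a)
          | inr t => rw [ng_adj_inl_inr] at h''; rw [← h'', hk]
        subst hz
        simp only [support_cons, List.nodup_cons, support_nil] at hp
        have : Sum.inr (nbr j) ∈ q'.support := start_mem_support q'
        tauto

end

section
variable {m s : ℕ} {nbr : Fin m → Fin s}
open SimpleGraph Walk Sum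

lemma ng_aux2 {i j : Fin m} (hij : i ≠ j) (hnn : nbr i ≠ nbr j)
    (q : (nestGraph0 m s nbr).Walk (Sum.inl i) (Sum.inr (nbr i)))
    (hnd : q.support.Nodup) (hlen : 2 ≤ q.length)
    (he : s(Sum.inl i, Sum.inl j) ∈ q.edges)
    (huniq : ∀ e ∈ q.edges, ∀ a b : Fin m,
      e = s(Sum.inl a, Sum.inl b) → e = s(Sum.inl i, Sum.inl j)) : False := by
  cases q with
  | cons h q'' =>
    rename_i y
    simp only [support_cons, List.nodup_cons] at hnd
    have hni : Sum.inl i ∉ q''.support := hnd.1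
    have hfe : s(Sum.inl (α := Fin m) i, y) = s(Sum.inl i, Sum.inl (β := Fin s) j) := by
      rw [edges_cons] at he
      rcases List.mem_cons.mp he with h1 | h1
      · exact h1.symm
      · exact absurd (q''.fst_mem_support_of_mem_edges h1) hni
    have hy : y = Sum.inl j := by
      rw [Sym2.eq_iff] at hfe
      rcases hfe with ⟨-, h2⟩ | ⟨h2, h3⟩
      · exact h2
      · exact absurd (Sum.inl.injEq .. ▸ h2 : i = j) hij
    subst hy
    have hnotin : s(Sum.inl (α := Fin m) i, Sum.inl (β := Fin s) j) ∉ q''.edges := fun hh =>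
      hni (q''.fst_mem_support_of_mem_edges hh)
    have hs : ∀ e ∈ q''.edges, ∀ a b : Fin m, e ≠ s(Sum.inl a, Sum.inl b) := by
      intro e hep a b hEq
      have := huniq e (by simp [hep]) a b hEq
      exact hnotin (this ▸ hep)
    obtain ⟨hle, h1, h2⟩ := ng_spoke_path j _ q'' hnd.2 hs
    have hlen' : q''.length = 1 ∨ q''.length = 2 := by
      simp only [length_cons] at hlen; omega
    rcases hlen' with hl | hl
    · have := h1 hl
      simp only [Sum.inr.injEq] at this
      exact hnn this
    · obtain ⟨k, hk, -⟩ := h2 hl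
      simp at hk

lemma ng_main_aux {i j : Fin m} (hij : i ≠ j) (hnn : nbr i ≠ nbr j)
    (W' : (nestGraph0 m s nbr).Walk (Sum.inl i) (Sum.inl i)) (hW' : W'.IsCycle)
    (he : s(Sum.inl i, Sum.inl j) ∈ W'.edges)
    (huniq : ∀ e ∈ W'.edges, ∀ a b : Fin m,
      e = s(Sum.inl a, Sum.inl b) → e = s(Sum.inl i, Sum.inl j)) : False := by
  cases W' with
  | nil => exact hW'.ne_nil rfl
  | cons h p =>
    rename_i x
    have hlen3 : 3 ≤ p.length + 1 := by
      simpa using hW'.three_le_length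
    have hnodup_p : p.support.Nodup := by
      have := (Walk.isCycle_def _).mp hW'
      simpa [support_cons] using this.2.2
    have hednd : (s(Sum.inl (α := Fin m) i, x) :: p.edges).Nodup := by
      simpa using hW'.isCircuit.isTrail.edges_nodup
    cases x with
    | inl j₀ =>
      have hfe : s(Sum.inl (α := Fin m) i, Sum.inl (β := Fin s) j₀)
          = s(Sum.inl i, Sum.inl j) := huniq _ (by simp) i j₀ rfl
      have hj₀ : j₀ = j := by
        rw [Sym2.eq_iff] at hfe
        rcases hfe with ⟨-, h2⟩ | ⟨h2, h3⟩
        · simpa using h2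
        · exact absurd (by simpa using h2 : i = j) hij
      subst hj₀
      have hnotin : s(Sum.inl (α := Fin m) i, Sum.inl (β := Fin s) j₀) ∉ p.edges :=
        (List.nodup_cons.mp hednd).1
      have hs : ∀ e ∈ p.edges, ∀ a b : Fin m, e ≠ s(Sum.inl a, Sum.inl b) := by
        intro e hep a b hEq
        have := huniq e (by simp [hep]) a b hEq
        exact hnotin (this ▸ hep)
      obtain ⟨hle, h1, h2⟩ := ng_spoke_path j₀ _ p hnodup_p hs
      obtain ⟨k, hk, hk2⟩ := h2 (by omega)
      simp only [Sum.inl.injEq] at hk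
      exact hnn (hk ▸ hk2)
    | inr t =>
      have ht : nbr i = t := ng_adj_inl_inr.mp h
      subst ht
      have hep : s(Sum.inl (α := Fin m) i, Sum.inl (β := Fin s) j) ∈ p.edges := by
        rw [edges_cons] at he
        rcases List.mem_cons.mp he with h1 | h1
        · exact absurd h1 (by simp [Sym2.eq_iff])
        · exact h1
      refine ng_aux2 hij hnn p.reverse ?_ ?_ ?_ ?_
      · rw [support_reverse, List.nodup_reverse]; exact hnodup_p
      · rw [length_reverse]; omega
      · rw [edges_reverse]; exact List.mem_reverse.mpr hep
      · intro e hee a b hEq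
        refine huniq e ?_ a b hEq
        rw [edges_reverse] at hee
        simp [List.mem_reverse.mp hee]

end


/-- In the bipartite graph obtained from a nesting graph by deleting all
`S_f`–`S_f` edges, every inner face (whose boundary is a cycle of the graph)
is incident to at least two edges of the cycle `C`: every graph cycle contains
at least two `C`-edges.  This uses that each cycle vertex has exactly one
neighbor among the split vertices and that no two cycle vertices sharing a
split neighbor are adjacent on `C`. -/
theorem stmt9 (m s : ℕ) (nbr : Fin m → Fin s)
    (hnonadj : ∀ i j : Fin m, j.1 = (i.1 + 1) % m → i ≠ j → nbr i ≠ nbr j)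
    (v : Fin m ⊕ Fin s) (W : (nestGraph0 m s nbr).Walk v v) (hW : W.IsCycle) :
    ∃ e₁ ∈ W.edges, ∃ e₂ ∈ W.edges, e₁ ≠ e₂ ∧
      (∃ i j : Fin m, e₁ = s(Sum.inl i, Sum.inl j)) ∧
      (∃ i j : Fin m, e₂ = s(Sum.inl i, Sum.inl j)) := by
  classical
  by_contra hcon
  push_neg at hcon
  by_cases hC : ∃ e ∈ W.edges, ∃ i j : Fin m, e = s(Sum.inl i, Sum.inl j)
  · obtain ⟨e₁, he₁, i, j, rfl⟩ := hC
    have hadj : (nestGraph0 m s nbr).Adj (Sum.inl i) (Sum.inl j) :=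
      W.edges_subset_edgeSet he₁
    have hij : i ≠ j := fun hh => hadj.ne (hh ▸ rfl)
    have hnn : nbr i ≠ nbr j := ng_key hnonadj hadj
    have hmem : Sum.inl i ∈ W.support := W.fst_mem_support_of_mem_edges he₁
    refine ng_main_aux hij hnn (W.rotate _ hmem) (hW.rotate hmem) ?_ ?_
    · exact ((W.rotate_edges _ hmem).perm.mem_iff).mpr he₁
    · intro e hee a b hEq
      by_contra hne
      exact hcon _ he₁ e ((W.rotate_edges _ hmem).perm.mem_iff.mp hee)
        (Ne.symm hne) ⟨i, j, rfl⟩ a b hEq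
  · push_neg at hC
    cases W with
    | nil => exact hW.ne_nil rfl
    | cons h p =>
      rename_i x
      have hlen3 : 3 ≤ p.length + 1 := by simpa using hW.three_le_length
      have hnodup_p : p.support.Nodup := by
        have := (Walk.isCycle_def _).mp hW
        simpa [Walk.support_cons] using this.2.2
      cases v with
      | inl i =>
        cases x with
        | inl k => exact hC _ (by simp) i k rfl
        | inr t =>
          have ht : nbr i = t := ng_adj_inl_inr.mp h
          subst ht
          have hs : ∀ e ∈ p.reverse.edges, ∀ a b : Fin m,
              e ≠ s(Sum.inl a, Sum.inl b) := by
            intro e hee a b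
            apply hC
            rw [edges_reverse] at hee
            simp [List.mem_reverse.mp hee]
          obtain ⟨hle, h1, h2⟩ := ng_spoke_path i _ p.reverse
            (by rw [support_reverse, List.nodup_reverse]; exact hnodup_p) hs
          rw [length_reverse] at hle h2
          obtain ⟨k, hk, -⟩ := h2 (by omega)
          simp at hk
      | inr t =>
        cases x with
        | inr t' => exact ng_not_adj_inr_inr h
        | inl k =>
          have hs : ∀ e ∈ p.edges, ∀ a b : Fin m,
              e ≠ s(Sum.inl a, Sum.inl b) := by
            intro e hee a b
            apply hC
            simp [hee]
          obtain ⟨hle, h1, h2⟩ := ng_spoke_path k _ p hnodup_p hs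
          obtain ⟨k', hk, -⟩ := h2 (by omega)
          simp at hk
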